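/- The group presented by ⟨t_1, t_2, t_3 | t_i^2 = (t_1 t_2)^3 = (t_2 t_3)^4 = (t_1 t_3)^4 = e, (t_1 t_2 t_3 t_2)^2 = e⟩ is isomorphic to the Weyl group of type B_3, of order 48. -/

import Mathlib

namespace Stmt16

/-- The relators of the group `⟨t₁,t₂,t₃ ∣ tᵢ² = (t₁t₂)³ = (t₂t₃)⁴ = (t₁t₃)⁴ = e,
(t₁t₂t₃t₂)² = e⟩`. -/
def rels : Set (FreeGroup (Fin 3)) :=
  let a := FreeGroup.of (0 : Fin 3)
  let b := FreeGroup.of (1 : Fin 3)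
  let c := FreeGroup.of (2 : Fin 3)
  {a ^ 2, b ^ 2, c ^ 2, (a * b) ^ 3, (b * c) ^ 4, (a * c) ^ 4, (a * (b * c * b)) ^ 2}

/-- The Coxeter matrix of type `B₃`. -/
def MB3 : CoxeterMatrix (Fin 3) where
  M := !![1, 3, 2; 3, 1, 4; 2, 4, 1]
  isSymm := by decide
  diagonal := by decide
  off_diagonal := by intro i i'; fin_cases i <;> fin_cases i' <;> simp

namespace Aux

/-! ### The presented group side -/

def A : PresentedGroup rels := PresentedGroup.of 0
def B : PresentedGroup rels := PresentedGroup.of 1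
def C : PresentedGroup rels := PresentedGroup.of 2

lemma relG (r : FreeGroup (Fin 3)) (h : r ∈ rels) : PresentedGroup.mk rels r = 1 :=
  (QuotientGroup.eq_one_iff r).mpr (Subgroup.subset_normalClosure h)

lemma pow2' {G : Type*} [Monoid G] (x : G) : x ^ 2 = x * x := sq x

lemma pow3' {G : Type*} [Monoid G] (x : G) : x ^ 3 = x * x * x := by
  rw [show (3:ℕ) = 2+1 from rfl, pow_succ, sq]

lemma pow4' {G : Type*} [Monoid G] (x : G) : x ^ 4 = x * x * x * x := by
  rw [show (4:ℕ) = 3+1 from rfl, pow_succ, pow3']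

lemma hA : A * A = 1 := by
  have h := relG ((FreeGroup.of (0 : Fin 3)) ^ 2) (by simp [rels])
  rwa [map_pow, pow_two] at h

lemma hB : B * B = 1 := by
  have h := relG ((FreeGroup.of (1 : Fin 3)) ^ 2) (by simp [rels])
  rwa [map_pow, pow_two] at h

lemma hC : C * C = 1 := by
  have h := relG ((FreeGroup.of (2 : Fin 3)) ^ 2) (by simp [rels])
  rwa [map_pow, pow_two] at h

lemma hAB : (A * B) ^ 3 = 1 := by
  have h := relG ((FreeGroup.of (0 : Fin 3) * FreeGroup.of 1) ^ 3) (by simp [rels])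
  rwa [map_pow, map_mul] at h

lemma hBC : (B * C) ^ 4 = 1 := by
  have h := relG ((FreeGroup.of (1 : Fin 3) * FreeGroup.of 2) ^ 4) (by simp [rels])
  rwa [map_pow, map_mul] at h

lemma hAC : (A * C) ^ 4 = 1 := by
  have h := relG ((FreeGroup.of (0 : Fin 3) * FreeGroup.of 2) ^ 4) (by simp [rels])
  rwa [map_pow, map_mul] at h

lemma hD : (A * (B * C * B)) ^ 2 = 1 := by
  have h := relG ((FreeGroup.of (0 : Fin 3) *
      (FreeGroup.of 1 * FreeGroup.of 2 * FreeGroup.of 1)) ^ 2) (by simp [rels])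
  rwa [map_pow, map_mul, map_mul, map_mul] at h

lemma iA : A⁻¹ = A := inv_eq_of_mul_eq_one_right hA
lemma iB : B⁻¹ = B := inv_eq_of_mul_eq_one_right hB
lemma iC : C⁻¹ = C := inv_eq_of_mul_eq_one_right hC

lemma cA (x : PresentedGroup rels) : A * (A * x) = x := by rw [← mul_assoc, hA, one_mul]
lemma cB (x : PresentedGroup rels) : B * (B * x) = x := by rw [← mul_assoc, hB, one_mul]
lemma cC (x : PresentedGroup rels) : C * (C * x) = x := by rw [← mul_assoc, hC, one_mul]

lemma babL : A * B * A = B * A * B := by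
  have h : (A * B * A) * (B * A * B) = 1 := by
    calc (A * B * A) * (B * A * B) = (A * B) ^ 3 := by rw [pow3']; group
    _ = 1 := hAB
  calc A * B * A = (B * A * B)⁻¹ := eq_inv_of_mul_eq_one_left h
  _ = B * A * B := by simp [mul_inv_rev, iA, iB, mul_assoc]

lemma brAB (x : PresentedGroup rels) : A * (B * (A * x)) = B * (A * (B * x)) := by
  simp only [← mul_assoc]; rw [babL]

lemma brBA (x : PresentedGroup rels) : B * (A * (B * x)) = A * (B * (A * x)) :=
  (brAB x).symm

lemma d1 : A * (B * (C * B)) = B * (C * (B * A)) := by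
  have h : (A * (B * (C * B))) * (A * (B * (C * B))) = 1 := by
    calc (A * (B * (C * B))) * (A * (B * (C * B))) = (A * (B * C * B)) ^ 2 := by rw [pow2']; group
    _ = 1 := hD
  calc A * (B * (C * B)) = (A * (B * (C * B)))⁻¹ := eq_inv_of_mul_eq_one_left h
  _ = B * (C * (B * A)) := by simp [mul_inv_rev, iA, iB, iC, mul_assoc]

lemma d1L : A * B * C * B = B * C * B * A := by simp only [mul_assoc]; exact d1

lemma d1t (x : PresentedGroup rels) :
    A * (B * (C * (B * x))) = B * (C * (B * (A * x))) := by
  simp only [← mul_assoc]; rw [d1L]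

lemma E2t (x : PresentedGroup rels) :
    A * (B * (A * (C * (B * x)))) = C * (B * (A * x)) := by
  rw [← brBA, d1t, cB]

lemma R2 (x : PresentedGroup rels) :
    A * (B * (A * (C * x))) = C * (A * (B * (A * x))) := by
  have h := E2t (B * x)
  rw [cB] at h
  rw [brBA] at h
  exact h

lemma R3 (x : PresentedGroup rels) :
    B * (A * (C * (A * x))) = A * (C * (A * (B * x))) := by
  have h := R2 (A * x)
  rw [cA] at h
  have h2 := congrArg (A * ·) h
  rw [cA] at h2
  exact h2

lemma hQ : (B * (A * (C * A))) ^ 2 = 1 := by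
  rw [show (B * (A * (C * A))) ^ 2 = B * (A * (C * (A * (B * (A * (C * A)))))) from by rw [pow2']; group]
  rw [R3, cB, cA, cC]
  exact hA

/-- The images of the Coxeter generators in the presented group. -/
def g : Fin 3 → PresentedGroup rels := ![B, A, A * (C * A)]

lemma hg : MB3.IsLiftable g := by
  intro i j
  fin_cases i <;> fin_cases j
  · show (B * B) ^ 1 = 1
    rw [pow_one]; exact hB
  · show (B * A) ^ 3 = 1
    rw [show B * A = (A * B)⁻¹ by simp [mul_inv_rev, iA, iB], inv_pow, hAB, inv_one]
  · show (B * (A * (C * A))) ^ 2 = 1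
    exact hQ
  · show (A * B) ^ 3 = 1
    exact hAB
  · show (A * A) ^ 1 = 1
    rw [pow_one]; exact hA
  · show (A * (A * (C * A))) ^ 4 = 1
    rw [cA, show C * A = (A * C)⁻¹ by simp [mul_inv_rev, iA, iC], inv_pow, hAC, inv_one]
  · show ((A * (C * A)) * B) ^ 2 = 1
    rw [show (A * (C * A)) * B = (B * (A * (C * A)))⁻¹ by
      simp [mul_inv_rev, iA, iB, iC, mul_assoc], inv_pow, hQ, inv_one]
  · show ((A * (C * A)) * A) ^ 4 = 1
    rw [show (A * (C * A)) * A = A * C by rw [mul_assoc, mul_assoc, hA, mul_one]]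
    exact hAC
  · show ((A * (C * A)) * (A * (C * A))) ^ 1 = 1
    rw [pow_one, show (A * (C * A)) * (A * (C * A)) = A * (C * (A * (A * (C * A)))) from by
      group, cA, cC]
    exact hA

/-! ### The Coxeter group side -/

def cs : CoxeterSystem MB3 MB3.Group := MB3.toCoxeterSystem

def pW : MB3.Group := cs.simple 0
def qW : MB3.Group := cs.simple 1
def rW : MB3.Group := cs.simple 2

lemma cp (x : MB3.Group) : pW * (pW * x) = x := cs.simple_mul_simple_cancel_left 0
lemma cq (x : MB3.Group) : qW * (qW * x) = x := cs.simple_mul_simple_cancel_left 1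
lemma cr (x : MB3.Group) : rW * (rW * x) = x := cs.simple_mul_simple_cancel_left 2

lemma pp : pW * pW = 1 := cs.simple_mul_simple_self 0
lemma qq : qW * qW = 1 := cs.simple_mul_simple_self 1
lemma rr : rW * rW = 1 := cs.simple_mul_simple_self 2

lemma ip : pW⁻¹ = pW := cs.inv_simple 0
lemma iq : qW⁻¹ = qW := cs.inv_simple 1
lemma ir : rW⁻¹ = rW := cs.inv_simple 2

lemma hpq3 : (pW * qW) ^ 3 = 1 := cs.simple_mul_simple_pow 0 1
lemma hqp3 : (qW * pW) ^ 3 = 1 := cs.simple_mul_simple_pow 1 0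
lemma hrq4 : (rW * qW) ^ 4 = 1 := cs.simple_mul_simple_pow 2 1
lemma hpr2 : (pW * rW) ^ 2 = 1 := cs.simple_mul_simple_pow 0 2

lemma braid0 : qW * pW * qW = pW * qW * pW := by
  have h : (qW * pW * qW) * (pW * qW * pW) = 1 := by
    calc (qW * pW * qW) * (pW * qW * pW) = (qW * pW) ^ 3 := by rw [pow3']; group
    _ = 1 := hqp3
  calc qW * pW * qW = (pW * qW * pW)⁻¹ := eq_inv_of_mul_eq_one_left h
  _ = pW * qW * pW := by simp [mul_inv_rev, ip, iq, mul_assoc]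

lemma braid_qpq (x : MB3.Group) : qW * (pW * (qW * x)) = pW * (qW * (pW * x)) := by
  simp only [← mul_assoc]; rw [braid0]

lemma comm0 : pW * rW = rW * pW := by
  have h : (pW * rW) * (pW * rW) = 1 := by rw [← pow_two]; exact hpr2
  calc pW * rW = (pW * rW)⁻¹ := eq_inv_of_mul_eq_one_left h
  _ = rW * pW := by simp [mul_inv_rev, ip, ir]

lemma comm_pr (x : MB3.Group) : pW * (rW * x) = rW * (pW * x) := by
  simp only [← mul_assoc]; rw [comm0]

lemma comm_rp (x : MB3.Group) : rW * (pW * x) = pW * (rW * x) := (comm_pr x).symm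

lemma pq2 (x : MB3.Group) : pW * (qW * (pW * (qW * x))) = qW * (pW * x) := by
  conv_lhs => enter [2]; rw [braid_qpq]
  rw [cp]

lemma h3t (x : MB3.Group) : pW * (qW * (pW * (qW * (pW * (qW * x))))) = x := by
  calc pW * (qW * (pW * (qW * (pW * (qW * x))))) = ((pW * qW) ^ 3) * x := by rw [pow3']; group
  _ = x := by rw [hpq3, one_mul]

lemma h4t (x : MB3.Group) :
    rW * (qW * (rW * (qW * (rW * (qW * (rW * (qW * x))))))) = x := by
  calc rW * (qW * (rW * (qW * (rW * (qW * (rW * (qW * x))))))) = ((rW * qW) ^ 4) * x := by rw [pow4']; group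
  _ = x := by rw [hrq4, one_mul]

lemma rq7 (x : MB3.Group) :
    rW * (qW * (rW * (qW * (rW * (qW * (rW * x)))))) = qW * x := by
  have h := h4t (qW * x)
  rwa [cq] at h

/-- The hard identity `(p·qrq)⁴ = 1` in the Coxeter group. -/
lemma idA : (pW * (qW * (rW * qW))) ^ 4 = 1 := by
  rw [show (pW * (qW * (rW * qW))) ^ 4 =
    pW * (qW * (rW * (qW * (pW * (qW * (rW * (qW * (pW * (qW * (rW * (qW *
      (pW * (qW * (rW * qW)))))))))))))) from by rw [pow4']; group]
  rw [braid_qpq]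
  rw [comm_rp]
  conv_lhs => enter [2,2,2,2,2]; rw [comm_pr]
  rw [pq2]
  conv_lhs => enter [2,2,2,2,2,2,2]; rw [comm_pr]
  rw [pq2]
  conv_lhs => enter [2,2,2,2,2,2,2,2,2]; rw [comm_pr]
  rw [rq7]
  rw [pq2, cp]
  exact qq

/-- The hard identity `(q·pqrqp)² = 1` in the Coxeter group. -/
lemma idC : (qW * (pW * (qW * (rW * qW)) * pW)) ^ 2 = 1 := by
  rw [show (qW * (pW * (qW * (rW * qW)) * pW)) ^ 2 =
    qW * (pW * (qW * (rW * (qW * (pW * (qW * (pW * (qW * (rW * (qW * pW))))))))))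
      from by rw [pow2']; group]
  rw [braid_qpq]
  rw [comm_pr]
  rw [h3t]
  rw [cr, cq]
  exact pp

/-- The images of the presented-group generators in the Coxeter group. -/
def xg : Fin 3 → MB3.Group := ![qW, pW, qW * (rW * qW)]

lemma hx : ∀ r ∈ rels, FreeGroup.lift xg r = 1 := by
  intro r hr
  simp only [rels, Set.mem_insert_iff, Set.mem_singleton_iff] at hr
  rcases hr with rfl | rfl | rfl | rfl | rfl | rfl | rfl
  · simp only [map_pow, FreeGroup.lift_apply_of]
    show qW ^ 2 = 1
    rw [pow_two]; exact qq
  · simp only [map_pow, FreeGroup.lift_apply_of]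
    show pW ^ 2 = 1
    rw [pow_two]; exact pp
  · simp only [map_pow, FreeGroup.lift_apply_of]
    show (qW * (rW * qW)) ^ 2 = 1
    rw [show (qW * (rW * qW)) ^ 2 = qW * (rW * (qW * (qW * (rW * qW)))) from by rw [pow2']; group]
    rw [cq, cr]
    exact qq
  · simp only [map_pow, map_mul, FreeGroup.lift_apply_of]
    show (qW * pW) ^ 3 = 1
    exact hqp3
  · simp only [map_pow, map_mul, FreeGroup.lift_apply_of]
    show (pW * (qW * (rW * qW))) ^ 4 = 1
    exact idA
  · simp only [map_pow, map_mul, FreeGroup.lift_apply_of]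
    show (qW * (qW * (rW * qW))) ^ 4 = 1
    rw [cq]
    exact hrq4
  · simp only [map_pow, map_mul, FreeGroup.lift_apply_of]
    show (qW * (pW * (qW * (rW * qW)) * pW)) ^ 2 = 1
    exact idC

/-! ### The two homomorphisms and the isomorphism -/

def φ : PresentedGroup rels →* MB3.Group := PresentedGroup.toGroup hx

noncomputable def ψ : MB3.Group →* PresentedGroup rels := cs.lift ⟨g, hg⟩

lemma ψs (i : Fin 3) : ψ (cs.simple i) = g i := cs.lift_apply_simple hg i

lemma φof (x : Fin 3) : φ (PresentedGroup.of x) = xg x := PresentedGroup.toGroup.of hx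

lemma key10 : ψ (xg 0) = (PresentedGroup.of 0 : PresentedGroup rels) := by
  show ψ (cs.simple 1) = A; rw [ψs]; rfl

lemma key11 : ψ (xg 1) = (PresentedGroup.of 1 : PresentedGroup rels) := by
  show ψ (cs.simple 0) = B; rw [ψs]; rfl

lemma key12 : ψ (xg 2) = (PresentedGroup.of 2 : PresentedGroup rels) := by
  show ψ (cs.simple 1 * (cs.simple 2 * cs.simple 1)) = C
  rw [map_mul, map_mul, ψs, ψs]
  show A * ((A * (C * A)) * A) = C
  rw [show (A * (C * A)) * A = A * C by rw [mul_assoc, mul_assoc, hA, mul_one], cA]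

lemma comp1 : ψ.comp φ = MonoidHom.id (PresentedGroup rels) := by
  refine PresentedGroup.ext fun i => ?_
  rw [MonoidHom.comp_apply, MonoidHom.id_apply, φof]
  fin_cases i
  · exact key10
  · exact key11
  · exact key12

lemma key20 : φ (g 0) = cs.simple 0 := by
  show φ (PresentedGroup.of 1) = pW; rw [φof]; rfl

lemma key21 : φ (g 1) = cs.simple 1 := by
  show φ (PresentedGroup.of 0) = qW; rw [φof]; rfl

lemma key22 : φ (g 2) = cs.simple 2 := by
  show φ (PresentedGroup.of 0 * (PresentedGroup.of 2 * PresentedGroup.of 0)) = rW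
  rw [map_mul, map_mul, φof, φof]
  show qW * ((qW * (rW * qW)) * qW) = rW
  rw [show (qW * (rW * qW)) * qW = qW * rW by rw [mul_assoc, mul_assoc, qq, mul_one], cq]

lemma comp2 : φ.comp ψ = MonoidHom.id MB3.Group := by
  refine cs.ext_simple fun i => ?_
  rw [MonoidHom.comp_apply, MonoidHom.id_apply, ψs]
  fin_cases i
  · exact key20
  · exact key21
  · exact key22

end Aux

/-- The group `⟨t₁,t₂,t₃ ∣ tᵢ² = (t₁t₂)³ = (t₂t₃)⁴ = (t₁t₃)⁴ = e, (t₁t₂t₃t₂)² = e⟩` is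
isomorphic to the Weyl group of type `B₃` (of order 48). -/
theorem presentedGroup_iso_weylB3 :
    Nonempty (PresentedGroup rels ≃* MB3.Group) := by
  exact ⟨MonoidHom.toMulEquiv Aux.φ Aux.ψ Aux.comp1 Aux.comp2⟩

end Stmt16
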